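/- Let S be a discrete semigroup with the property that for every finite subset σ ⊆ S there exists s_σ ∈ S with s·s_σ = s_σ for all s ∈ σ. Let C be a weakly closed subset of a Banach space E and {T_s : s ∈ S} a representation of S on C by weak-weak continuous maps such that the orbit {T_s c : s ∈ S} of some c ∈ C is relatively weakly compact. Then there exists z ∈ C with T_s z = z for all s ∈ S. -/

import Mathlib

open Set Filter Topology

instance weakSpaceT2 {E : Type*} [NormedAddCommGroup E] [NormedSpace ℝ E] :
    T2Space (WeakSpace ℝ E) := by
  refine (WeakBilin.isEmbedding (B := (topDualPairing ℝ E).flip) ?_).t2Space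
  intro x y h
  rw [NormedSpace.eq_iff_forall_dual_eq ℝ]
  intro g
  exact congrArg (fun φ => φ g) h

theorem stmt18 {E : Type*} [NormedAddCommGroup E] [NormedSpace ℝ E] [CompleteSpace E]
    (S : Type*) [Semigroup S]
    (hS : ∀ σ : Finset S, ∃ s₀ : S, ∀ s ∈ σ, s * s₀ = s₀)
    (C : Set E) (hwc : IsClosed (toWeakSpace ℝ E '' C))
    (T : S → E → E) (hmaps : ∀ s, ∀ x ∈ C, T s x ∈ C)
    (hrep : ∀ s t, ∀ x ∈ C, T (s * t) x = T s (T t x))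
    (hcont : ∀ s, ContinuousOn
      (fun x : WeakSpace ℝ E => toWeakSpace ℝ E (T s ((toWeakSpace ℝ E).symm x)))
      (toWeakSpace ℝ E '' C))
    (c : E) (hc : c ∈ C)
    (horbit : IsCompact (closure (toWeakSpace ℝ E '' {x : E | ∃ s, x = T s c}))) :
    ∃ z ∈ C, ∀ s, T s z = z := by
  classical
  set ι := toWeakSpace ℝ E with hι
  -- the directed family of closed sets
  set D : Finset S → Set (WeakSpace ℝ E) := fun σ =>
    closure (ι '' {x | ∃ t, (∀ s ∈ σ, s * t = t) ∧ x = T t c}) with hD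
  have hsub : ∀ σ, D σ ⊆ closure (ι '' {x : E | ∃ s, x = T s c}) := fun σ =>
    closure_mono (image_mono (fun x ⟨t, _, hx⟩ => ⟨t, hx⟩))
  have hcpt : ∀ σ, IsCompact (D σ) := fun σ =>
    horbit.of_isClosed_subset isClosed_closure (hsub σ)
  have hne : ∀ σ, (D σ).Nonempty := by
    intro σ
    obtain ⟨s₀, hs₀⟩ := hS σ
    exact ⟨ι (T s₀ c), subset_closure ⟨T s₀ c, ⟨s₀, hs₀, rfl⟩, rfl⟩⟩
  have hdir : Directed (· ⊇ ·) D := by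
    intro σ τ
    refine ⟨σ ∪ τ, closure_mono (image_mono ?_), closure_mono (image_mono ?_)⟩
    · rintro x ⟨t, ht, hx⟩
      exact ⟨t, fun s hs => ht s (Finset.mem_union_left _ hs), hx⟩
    · rintro x ⟨t, ht, hx⟩
      exact ⟨t, fun s hs => ht s (Finset.mem_union_right _ hs), hx⟩
  obtain ⟨z, hz⟩ := IsCompact.nonempty_iInter_of_directed_nonempty_isCompact_isClosed
    D hdir hne hcpt (fun σ => isClosed_closure)
  simp only [mem_iInter] at hz
  -- z lies in the image of C
  have horbC : ι '' {x : E | ∃ s, x = T s c} ⊆ ι '' C := by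
    rintro _ ⟨x, ⟨s, rfl⟩, rfl⟩
    exact ⟨T s c, hmaps s c hc, rfl⟩
  have hzC : z ∈ ι '' C := (hwc.closure_subset_iff.mpr horbC) (hsub ∅ (hz ∅))
  obtain ⟨z', hz'C, rfl⟩ := hzC
  refine ⟨z', hz'C, fun s => ?_⟩
  -- z is fixed by T s
  set f : WeakSpace ℝ E → WeakSpace ℝ E := fun x => ι (T s (ι.symm x)) with hf
  set W : Set (WeakSpace ℝ E) := ι '' {x | ∃ t, s * t = t ∧ x = T t c} with hW
  have hWC : W ⊆ ι '' C := by
    rintro _ ⟨x, ⟨t, _, rfl⟩, rfl⟩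
    exact ⟨T t c, hmaps t c hc, rfl⟩
  have hfix : ∀ x ∈ W, f x = x := by
    rintro _ ⟨x, ⟨t, hst, rfl⟩, rfl⟩
    have : T s (T t c) = T t c := by
      rw [← hrep s t c hc, hst]
    simp [hf, LinearEquiv.symm_apply_apply, this]
  have hzW : ι z' ∈ closure W := by
    have := hz {s}
    simp only [hD, Finset.mem_singleton] at this
    refine closure_mono (image_mono ?_) this
    rintro x ⟨t, ht, hx⟩
    exact ⟨t, ht s rfl, hx⟩
  have hzCl : ι z' ∈ ι '' C := ⟨z', hz'C, rfl⟩
  -- use continuity on the image of C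
  have hNeBot : (𝓝[W] (ι z')).NeBot := mem_closure_iff_nhdsWithin_neBot.mp hzW
  have h1 : Tendsto f (𝓝[W] (ι z')) (𝓝 (f (ι z'))) :=
    (((hcont s).continuousWithinAt hzCl).mono hWC)
  have h2 : Tendsto f (𝓝[W] (ι z')) (𝓝 (ι z')) := by
    have : Tendsto (id : WeakSpace ℝ E → _) (𝓝[W] (ι z')) (𝓝 (ι z')) :=
      tendsto_nhdsWithin_of_tendsto_nhds tendsto_id
    refine this.congr' ?_
    filter_upwards [self_mem_nhdsWithin] with x hx
    exact (hfix x hx).symm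
  have hfz : f (ι z') = ι z' := tendsto_nhds_unique h1 h2
  have : ι (T s z') = ι z' := by
    simpa [hf, LinearEquiv.symm_apply_apply] using hfz
  exact ι.injective this
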